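/- arXiv:0812.2192 — 4 statements merged into one kernel-verified Lean document; each statement's English description precedes it below -/
import Mathlib

section
/- Every torsion-free virtually cyclic group is cyclic: if G is a group in which every non-identity element has infinite order, and G has a cyclic subgroup of finite index, then G itself is cyclic. -/
open scoped commutatorElement

private lemma conj_zpow'' {K : Type*} [Group K] (g x : K) (m : ℤ) :
    (g * x * g⁻¹) ^ m = g * x ^ m * g⁻¹ := by
  have := map_zpow (MulAut.conj g) x m
  simpa [MulAut.conj_apply] using this.symm

/-- A commutator is unchanged when its left entry is multiplied by a central element. -/
private lemma comm_central_left {K : Type*} [Group K] (x g z : K)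
    (hz : ∀ k, z * k = k * z) : ⁅x * z, g⁆ = ⁅x, g⁆ := by
  have h : z * g * z⁻¹ = g := by rw [hz g]; group
  rw [commutatorElement_def, commutatorElement_def, mul_inv_rev]
  calc x * z * g * (z⁻¹ * x⁻¹) * g⁻¹ = x * (z * g * z⁻¹) * x⁻¹ * g⁻¹ := by group
    _ = x * g * x⁻¹ * g⁻¹ := by rw [h]

private lemma comm_central_right {K : Type*} [Group K] (x g z : K)
    (hz : ∀ k, z * k = k * z) : ⁅x, g * z⁆ = ⁅x, g⁆ := by
  have h : z * x⁻¹ * z⁻¹ = x⁻¹ := by rw [hz x⁻¹]; group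
  rw [commutatorElement_def, commutatorElement_def, mul_inv_rev]
  calc x * (g * z) * x⁻¹ * (z⁻¹ * g⁻¹) = x * g * (z * x⁻¹ * z⁻¹) * g⁻¹ := by group
    _ = x * g * x⁻¹ * g⁻¹ := by rw [h]

/-- If the center has finite index (finite quotient), there are finitely many commutators. -/
private lemma finite_commutatorSet_of_finite_quotient_center (K : Type*) [Group K]
    [Finite (K ⧸ Subgroup.center K)] : Finite (commutatorSet K) := by
  have hsub : commutatorSet K ⊆ Set.range
      (fun p : (K ⧸ Subgroup.center K) × (K ⧸ Subgroup.center K) => ⁅p.1.out, p.2.out⁆) := by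
    rintro c ⟨x, y, rfl⟩
    refine ⟨(QuotientGroup.mk x, QuotientGroup.mk y), ?_⟩
    obtain ⟨z, hz⟩ := QuotientGroup.mk_out_eq_mul (Subgroup.center K) x
    obtain ⟨w, hw⟩ := QuotientGroup.mk_out_eq_mul (Subgroup.center K) y
    have hzc : ∀ k, (z : K) * k = k * z := fun k => (Subgroup.mem_center_iff.mp z.2 k).symm
    have hwc : ∀ k, (w : K) * k = k * w := fun k => (Subgroup.mem_center_iff.mp w.2 k).symm
    simp only [hz, hw]
    rw [comm_central_left _ _ _ hzc, comm_central_right _ _ _ hwc]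
  exact Set.Finite.subset (Set.finite_range _) hsub

/-- A torsion-free commutative group with a cyclic subgroup of finite index is cyclic. -/
private lemma cyclic_of_comm_of_finiteIndex_cyclic {K : Type*} [Group K]
    (hcomm : ∀ x y : K, x * y = y * x)
    (htf : ∀ x : K, x ≠ 1 → ¬ IsOfFinOrder x)
    (M : Subgroup K) (hMfi : M.FiniteIndex) (hMc : IsCyclic M) : IsCyclic K := by
  haveI := hMfi
  haveI := hMc
  letI : CommGroup K := { (inferInstance : Group K) with mul_comm := hcomm }
  haveI : M.Normal := Subgroup.normal_of_comm M
  set n := M.index with hndef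
  have hn0 : n ≠ 0 := Subgroup.FiniteIndex.index_ne_zero
  have hpow : ∀ x : K, x ^ n ∈ M := fun x => Subgroup.pow_index_mem M x
  let f : K →* ↥M := (powMonoidHom n : K →* K).codRestrict M hpow
  have hfinj : Function.Injective f := by
    intro x y hxy
    have hxy' : x ^ n = y ^ n := by
      simpa [f, Subtype.ext_iff, powMonoidHom] using hxy
    by_contra hne
    have hxy1 : (x * y⁻¹) ^ n = 1 := by
      rw [mul_pow, inv_pow, hxy', mul_inv_cancel]
    have hne1 : x * y⁻¹ ≠ 1 := by
      simpa [mul_inv_eq_one] using hne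
    exact htf _ hne1 (isOfFinOrder_iff_pow_eq_one.mpr ⟨n, Nat.pos_of_ne_zero hn0, hxy1⟩)
  haveI : IsCyclic ↥f.range := Subgroup.isCyclic f.range
  exact isCyclic_of_surjective (MonoidHom.ofInjective hfinj).symm
    (MonoidHom.ofInjective hfinj).symm.surjective

/-- Every torsion-free virtually cyclic group is cyclic: if every non-identity element of
`G` has infinite order and `G` has a cyclic subgroup of finite index, then `G` is cyclic. -/
theorem torsionFree_virtuallyCyclic_isCyclic (G : Type*) [Group G]
    (htf : ∀ g : G, g ≠ 1 → ¬ IsOfFinOrder g)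
    (H : Subgroup G) (hcyc : IsCyclic H) (hfin : H.FiniteIndex) :
    IsCyclic G := by
  haveI := hcyc
  haveI := hfin
  rcases finite_or_infinite H with hHfin | hHinf
  · -- `G` is finite, hence trivial by torsion-freeness.
    haveI : Finite G := Finite.of_equiv _ (Subgroup.groupEquivQuotientProdSubgroup (s := H)).symm
    have h1 : ∀ g : G, g = 1 := fun g => by
      by_contra hg
      exact htf g hg (isOfFinOrder_of_finite g)
    haveI : Subsingleton G := ⟨fun a b => (h1 a).trans (h1 b).symm⟩
    infer_instance
  · haveI : Infinite G := Infinite.of_injective (fun h : H => (h : G)) Subtype.coe_injective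
    set N := H.normalCore with hNdef
    haveI hNnorm : N.Normal := H.normalCore_normal
    haveI : N.FiniteIndex := H.finiteIndex_normalCore
    haveI hNinf : Infinite ↥N := by
      by_contra h
      rw [not_infinite_iff_finite] at h
      haveI : Finite G :=
        Finite.of_equiv _ (Subgroup.groupEquivQuotientProdSubgroup (s := N)).symm
      exact not_finite G
    have hNleH : N ≤ H := H.normalCore_le
    haveI : IsCyclic ↥N := Subgroup.isCyclic_of_le hNleH
    obtain ⟨a', ha'⟩ := IsCyclic.exists_generator (α := ↥N)
    set a : G := (a' : G) with hadef
    have haN : a ∈ N := a'.2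
    have hNz : N = Subgroup.zpowers a := by
      ext x
      constructor
      · intro hx
        obtain ⟨k, hk⟩ := ha' ⟨x, hx⟩
        exact ⟨k, by have := congrArg (fun y : ↥N => (y : G)) hk; simpa using this⟩
      · rintro ⟨k, rfl⟩
        exact Subgroup.zpow_mem N haN k
    have ha1 : a ≠ 1 := by
      intro h
      have hNbot : N = ⊥ := by rw [hNz, h, Subgroup.zpowers_one_eq_bot]
      rw [hNbot] at hNinf
      exact not_finite ↥(⊥ : Subgroup G)
    have hainf : ¬ IsOfFinOrder a := htf a ha1
    have hazinj : Function.Injective fun n : ℤ => a ^ n :=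
      injective_zpow_iff_not_isOfFinOrder.mpr hainf
    -- every element conjugates `a` to `a` or `a⁻¹`
    have dich : ∀ g : G, g * a * g⁻¹ = a ∨ g * a * g⁻¹ = a⁻¹ := by
      intro g
      have h1 : g * a * g⁻¹ ∈ N := hNnorm.conj_mem a haN g
      have h2 : g⁻¹ * a * g ∈ N := by simpa using hNnorm.conj_mem a haN g⁻¹
      rw [hNz, Subgroup.mem_zpowers_iff] at h1 h2
      obtain ⟨m, hm⟩ := h1
      obtain ⟨k, hk⟩ := h2
      have hkm : a ^ (k * m) = a ^ (1 : ℤ) := by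
        rw [zpow_mul, hk, zpow_one]
        have hgg : g⁻¹ * a * g = g⁻¹ * a * (g⁻¹)⁻¹ := by rw [inv_inv]
        calc (g⁻¹ * a * g) ^ m = g⁻¹ * a ^ m * g := by
              rw [hgg, conj_zpow'', inv_inv]
          _ = g⁻¹ * (g * a * g⁻¹) * g := by rw [hm]
          _ = a := by group
      have hmul : k * m = 1 := hazinj hkm
      have hmul' : m * k = 1 := by rw [mul_comm]; exact hmul
      rcases Int.isUnit_iff.mp (IsUnit.of_mul_eq_one (a := m) k hmul') with h | h
      · left; rw [← hm, h, zpow_one]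
      · right; rw [← hm, h]
        simp
    -- the centralizer of `a`
    set L := Subgroup.centralizer {a} with hLdef
    have hNL : N ≤ L := by
      rw [hNz]
      rintro x ⟨k, rfl⟩
      exact Subgroup.mem_centralizer_singleton_iff.mpr ((Commute.refl a).zpow_left k).eq
    haveI : L.FiniteIndex := Subgroup.finiteIndex_of_le hNL
    have haL : a ∈ L := hNL haN
    have hNsubL : N.subgroupOf L = Subgroup.zpowers (⟨a, haL⟩ : ↥L) := by
      ext x
      rw [Subgroup.mem_subgroupOf, Subgroup.mem_zpowers_iff, hNz, Subgroup.mem_zpowers_iff]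
      constructor
      · rintro ⟨k, hk⟩
        exact ⟨k, Subtype.ext (by rw [Subgroup.coe_zpow]; exact hk)⟩
      · rintro ⟨k, hk⟩
        refine ⟨k, ?_⟩
        have := congrArg (fun y : ↥L => (y : G)) hk
        simpa [Subgroup.coe_zpow] using this
    haveI hNLfi : (N.subgroupOf L).FiniteIndex := Subgroup.instFiniteIndex_subgroupOf N L
    -- `L` is commutative
    have hcomm : ∀ x y : ↥L, x * y = y * x := by
      have hzc : Subgroup.zpowers (⟨a, haL⟩ : ↥L) ≤ Subgroup.center ↥L := by
        rintro x ⟨k, rfl⟩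
        rw [Subgroup.mem_center_iff]
        intro g
        have hgmem : (g : G) ∈ Subgroup.centralizer {a} := g.2
        have hg : (g : G) * a = a * (g : G) := Subgroup.mem_centralizer_singleton_iff.mp hgmem
        have hca : Commute (g : G) a := hg
        have hck : Commute (g : G) (a ^ k) := hca.zpow_right k
        ext
        simp only [Subgroup.coe_mul, Subgroup.coe_zpow]
        exact hck.eq
      haveI : (Subgroup.zpowers (⟨a, haL⟩ : ↥L)).FiniteIndex := by
        rw [← hNsubL]; infer_instance
      haveI : (Subgroup.center ↥L).FiniteIndex := Subgroup.finiteIndex_of_le hzc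
      haveI : Finite (↥L ⧸ Subgroup.center ↥L) := Subgroup.finite_quotient_of_finiteIndex
      haveI : Finite (commutatorSet ↥L) := finite_commutatorSet_of_finite_quotient_center ↥L
      haveI : Finite (_root_.commutator ↥L) := inferInstance
      intro x y
      by_contra hxy
      have h1 : ⁅x, y⁆ ≠ 1 := by rwa [Ne, commutatorElement_eq_one_iff_mul_comm]
      have hcmem : ⁅x, y⁆ ∈ _root_.commutator ↥L := by
        rw [commutator_def]
        exact Subgroup.commutator_mem_commutator (Subgroup.mem_top x) (Subgroup.mem_top y)
      have hfo : IsOfFinOrder ((⁅x, y⁆ : ↥L) : G) := by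
        have h2 : IsOfFinOrder (⟨⁅x, y⁆, hcmem⟩ : _root_.commutator ↥L) :=
          isOfFinOrder_of_finite _
        have h3 : IsOfFinOrder (⁅x, y⁆ : ↥L) := by
          simpa using (Subgroup.subtype _).isOfFinOrder h2
        exact L.subtype.isOfFinOrder h3
      have h2 : ((⁅x, y⁆ : ↥L) : G) ≠ 1 := fun h => h1 (Subtype.ext h)
      exact htf _ h2 hfo
    -- `L` is cyclic
    have htfL : ∀ x : ↥L, x ≠ 1 → ¬ IsOfFinOrder x := by
      intro x hx hfo
      have hx1 : (x : G) ≠ 1 := fun h => hx (Subtype.ext h)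
      exact htf _ hx1 (by simpa using L.subtype.isOfFinOrder hfo)
    haveI hNsubLc : IsCyclic ↥(N.subgroupOf L) :=
      isCyclic_of_surjective _ (Subgroup.subgroupOfEquivOfLe hNL).symm.surjective
    have hLcyc : IsCyclic ↥L :=
      cyclic_of_comm_of_finiteIndex_cyclic hcomm htfL (N.subgroupOf L) hNLfi hNsubLc
    by_cases hLtop : L = ⊤
    · haveI : IsCyclic ↥(⊤ : Subgroup G) := hLtop ▸ hLcyc
      exact isCyclic_of_surjective _ (Subgroup.topEquiv : ↥(⊤ : Subgroup G) ≃* G).surjective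
    · exfalso
      obtain ⟨g, hgL⟩ : ∃ g : G, g ∉ L := by
        by_contra h
        push_neg at h
        exact hLtop ((Subgroup.eq_top_iff' L).mpr h)
      have hgconj : g * a * g⁻¹ = a⁻¹ := by
        refine (dich g).resolve_left fun h => hgL ?_
        have hga : g * a = a * g := by
          calc g * a = (g * a * g⁻¹) * g := by group
            _ = a * g := by rw [h]
        show g ∈ Subgroup.centralizer {a}
        exact Subgroup.mem_centralizer_singleton_iff.mpr hga
      have ha2 : a⁻¹ ≠ a := by
        intro h
        apply hainf
        refine isOfFinOrder_iff_pow_eq_one.mpr ⟨2, by norm_num, ?_⟩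
        calc a ^ 2 = a * a := sq a
          _ = a * a⁻¹ := by rw [h]
          _ = 1 := mul_inv_cancel a
      have hginv : g⁻¹ * a * g = a⁻¹ := by
        rcases dich g⁻¹ with h | h
        · exfalso
          rw [inv_inv] at h
          apply ha2
          calc a⁻¹ = g * a * g⁻¹ := hgconj.symm
            _ = g * (g⁻¹ * a * g) * g⁻¹ := by rw [h]
            _ = a := by group
        · rwa [inv_inv] at h
      obtain ⟨b', hb'⟩ := hLcyc.exists_generator
      set b : G := (b' : G) with hbdef
      have hbL : b ∈ L := b'.2
      obtain ⟨t, ht⟩ := hb' ⟨a, haL⟩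
      have hta : b ^ t = a := by
        have := congrArg (fun x : ↥L => (x : G)) ht
        simpa [Subgroup.coe_zpow] using this
      have hb1 : b ≠ 1 := by
        intro h
        apply ha1
        rw [← hta, h, one_zpow]
      have hbinf : ¬ IsOfFinOrder b := htf b hb1
      have hbzinj : Function.Injective fun k : ℤ => b ^ k :=
        injective_zpow_iff_not_isOfFinOrder.mpr hbinf
      have ht0 : t ≠ 0 := by
        intro h
        apply ha1
        rw [← hta, h, zpow_zero]
      have hbmem : b ∈ Subgroup.centralizer {a} := hbL
      have hab : b * a = a * b := Subgroup.mem_centralizer_singleton_iff.mp hbmem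
      have e2 : g * a⁻¹ * g⁻¹ = a := by
        calc g * a⁻¹ * g⁻¹ = (g * a * g⁻¹)⁻¹ := by group
          _ = a := by rw [hgconj, inv_inv]
      have hgbL : g * b * g⁻¹ ∈ L := by
        rw [Subgroup.mem_centralizer_singleton_iff]
        have e1 : a⁻¹ * b = b * a⁻¹ := by
          calc a⁻¹ * b = a⁻¹ * (b * a) * a⁻¹ := by group
            _ = a⁻¹ * (a * b) * a⁻¹ := by rw [hab]
            _ = b * a⁻¹ := by group
        have key : a * (g * b * g⁻¹) = (g * b * g⁻¹) * a := by
          calc a * (g * b * g⁻¹)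
              = g * (g⁻¹ * a * g) * b * g⁻¹ := by group
            _ = g * a⁻¹ * b * g⁻¹ := by rw [hginv]
            _ = g * (b * a⁻¹) * g⁻¹ := by rw [← e1]; group
            _ = (g * b * g⁻¹) * (g * a⁻¹ * g⁻¹) := by group
            _ = (g * b * g⁻¹) * a := by rw [e2]
        exact key.symm
      obtain ⟨s, hs⟩ := hb' ⟨g * b * g⁻¹, hgbL⟩
      have hsb : b ^ s = g * b * g⁻¹ := by
        have := congrArg (fun x : ↥L => (x : G)) hs
        simpa [Subgroup.coe_zpow] using this
      have hst : b ^ (s * t) = b ^ (-t) := by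
        calc b ^ (s * t) = (b ^ s) ^ t := by rw [zpow_mul]
          _ = (g * b * g⁻¹) ^ t := by rw [hsb]
          _ = g * b ^ t * g⁻¹ := conj_zpow'' g b t
          _ = g * a * g⁻¹ := by rw [hta]
          _ = a⁻¹ := hgconj
          _ = (b ^ t)⁻¹ := by rw [hta]
          _ = b ^ (-t) := by rw [zpow_neg]
      have hs1 : s = -1 := by
        have h := hbzinj hst
        have h0 : (s + 1) * t = 0 := by ring_nf; linarith [h]
        rcases mul_eq_zero.mp h0 with h1 | h1
        · linarith
        · exact absurd h1 ht0
      have hg2L : g * g ∈ L := by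
        rw [Subgroup.mem_centralizer_singleton_iff]
        have key : a * (g * g) = (g * g) * a := by
          calc a * (g * g) = g * (g⁻¹ * a * g) * g := by group
            _ = g * a⁻¹ * g := by rw [hginv]
            _ = g * (g * a * g⁻¹) * g := by rw [← hgconj]
            _ = (g * g) * a := by group
        exact key.symm
      obtain ⟨m, hm⟩ := hb' ⟨g * g, hg2L⟩
      have hmg : b ^ m = g * g := by
        have := congrArg (fun x : ↥L => (x : G)) hm
        simpa [Subgroup.coe_zpow] using this
      have h1 : g * b ^ m * g⁻¹ = b ^ (-m) := by
        calc g * b ^ m * g⁻¹ = (g * b * g⁻¹) ^ m := (conj_zpow'' g b m).symm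
          _ = (b ^ s) ^ m := by rw [hsb]
          _ = b ^ (s * m) := by rw [← zpow_mul]
          _ = b ^ (-m) := by rw [hs1, neg_one_mul]
      have h2 : g * b ^ m * g⁻¹ = b ^ m := by
        rw [hmg]; group
      have hm0 : m = 0 := by
        have := hbzinj (h1.symm.trans h2)
        omega
      have hgg : g * g = 1 := by rw [← hmg, hm0, zpow_zero]
      have hg1 : g ≠ 1 := fun h => hgL (h ▸ L.one_mem)
      refine htf g hg1 (isOfFinOrder_iff_pow_eq_one.mpr ⟨2, by norm_num, ?_⟩)
      rw [sq]
      exact hgg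
end

section
/- Every nontrivial cyclic subgroup K of the discrete Heisenberg group Γ₃ is contained in exactly one maximal cyclic subgroup of Γ₃: there exists a maximal cyclic subgroup H of Γ₃ with K ≤ H, and any two maximal cyclic subgroups of Γ₃ containing K are equal. -/
/-- The discrete Heisenberg group `Γ₃`: triples `(a,b,c)` of integers, corresponding to the
upper unitriangular matrix `[[1,a,c],[0,1,b],[0,0,1]]`, with multiplication
`(a,b,c)·(a',b',c') = (a+a', b+b', c+c'+a*b')`. -/
@[ext]
structure Heisenberg where
  a : ℤ
  b : ℤ
  c : ℤ

namespace Heisenberg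

instance : Mul Heisenberg :=
  ⟨fun x y => ⟨x.a + y.a, x.b + y.b, x.c + y.c + x.a * y.b⟩⟩

instance : One Heisenberg := ⟨⟨0, 0, 0⟩⟩

instance : Inv Heisenberg := ⟨fun x => ⟨-x.a, -x.b, -x.c + x.a * x.b⟩⟩

theorem mul_def (x y : Heisenberg) :
    x * y = ⟨x.a + y.a, x.b + y.b, x.c + y.c + x.a * y.b⟩ := rfl

theorem one_def : (1 : Heisenberg) = ⟨0, 0, 0⟩ := rfl

theorem inv_def (x : Heisenberg) : x⁻¹ = ⟨-x.a, -x.b, -x.c + x.a * x.b⟩ := rfl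

instance : Group Heisenberg where
  mul_assoc x y z := by ext <;> simp [mul_def] <;> ring
  one_mul x := by ext <;> simp [mul_def, one_def]
  mul_one x := by ext <;> simp [mul_def, one_def]
  inv_mul_cancel x := by ext <;> simp [mul_def, inv_def, one_def]

end Heisenberg

/-- `H` is a maximal cyclic subgroup of `G`: `H` is cyclic and maximal with respect to
inclusion among cyclic subgroups of `G`. -/
def IsMaximalCyclic {G : Type*} [Group G] (H : Subgroup G) : Prop :=
  IsCyclic H ∧ ∀ K : Subgroup G, IsCyclic K → H ≤ K → K = H

namespace Heisenberg

/-- Triangular-number helper. -/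
def T (n : ℤ) : ℤ := n * (n - 1) / 2

theorem two_T (n : ℤ) : 2 * T n = n * (n - 1) := by
  obtain ⟨k, hk⟩ := Int.even_mul_succ_self (n - 1)
  have h2 : n * (n - 1) = 2 * k := by ring_nf; ring_nf at hk; omega
  unfold T
  omega

theorem T_mul (m e : ℤ) : T (m * e) = e ^ 2 * T m + m * T e := by
  have key : 2 * T (m * e) = 2 * (e ^ 2 * T m + m * T e) := by
    linear_combination two_T (m * e) - e ^ 2 * (two_T m) - m * (two_T e)
  linarith

theorem T_add_one (n : ℤ) : T (n + 1) = T n + n := by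
  have key : 2 * T (n + 1) = 2 * (T n + n) := by
    linear_combination two_T (n + 1) - two_T n
  linarith

theorem T_sub_one (n : ℤ) : T (n - 1) = T n - (n - 1) := by
  have key : 2 * T (n - 1) = 2 * (T n - (n - 1)) := by
    linear_combination two_T (n - 1) - two_T n
  linarith

theorem zpow_def (h : Heisenberg) (n : ℤ) :
    h ^ n = ⟨n * h.a, n * h.b, n * h.c + h.a * h.b * T n⟩ := by
  induction n using Int.induction_on with
  | zero =>
      rw [zpow_zero]
      have hT : T 0 = 0 := rfl
      ext <;> simp [one_def, hT]
  | succ k ih =>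
      rw [zpow_add_one, ih, mul_def]
      ext <;> simp only [T_add_one] <;> ring
  | pred k ih =>
      have : (-(k : ℤ) - 1) = (-(k : ℤ)) - 1 := by ring
      rw [this, zpow_sub_one, ih, mul_def, inv_def]
      ext <;> simp only [T_sub_one] <;> ring

/-- The subgroup generated by one element is cyclic. -/
theorem zpowers_isCyclic {G : Type*} [Group G] (g : G) :
    IsCyclic (Subgroup.zpowers g) := by
  refine ⟨⟨g, Subgroup.mem_zpowers g⟩, ?_⟩
  rintro ⟨x, hx⟩
  obtain ⟨k, hk⟩ := Subgroup.mem_zpowers_iff.mp hx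
  exact Subgroup.mem_zpowers_iff.mpr ⟨k, Subtype.ext (by simpa using hk)⟩

/-- Any cyclic subgroup is the `zpowers` of one of its elements. -/
theorem exists_zpowers {G : Type*} [Group G] (H : Subgroup G) (h : IsCyclic H) :
    ∃ g, H = Subgroup.zpowers g := by
  obtain ⟨⟨g, hg⟩, hgen⟩ := h.exists_generator
  refine ⟨g, le_antisymm ?_ (Subgroup.zpowers_le.mpr hg)⟩
  intro x hx
  obtain ⟨k, hk⟩ := Subgroup.mem_zpowers_iff.mp (hgen ⟨x, hx⟩)
  refine Subgroup.mem_zpowers_iff.mpr ⟨k, ?_⟩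
  have := congrArg (Subtype.val) hk
  simpa using this

/-- Two roots of the same nontrivial element have a common root. -/
theorem common_root {x y₁ y₂ : Heisenberg} {n₁ n₂ : ℤ}
    (hx : x ≠ 1) (h₁ : y₁ ^ n₁ = x) (h₂ : y₂ ^ n₂ = x) :
    ∃ z : Heisenberg, y₁ ∈ Subgroup.zpowers z ∧ y₂ ∈ Subgroup.zpowers z := by
  have hn₁ : n₁ ≠ 0 := by rintro rfl; rw [zpow_zero] at h₁; exact hx h₁.symm
  have hn₂ : n₂ ≠ 0 := by rintro rfl; rw [zpow_zero] at h₂; exact hx h₂.symm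
  rw [zpow_def] at h₁ h₂
  have ha₁ : n₁ * y₁.a = x.a := congrArg Heisenberg.a h₁
  have hb₁ : n₁ * y₁.b = x.b := congrArg Heisenberg.b h₁
  have hc₁ : n₁ * y₁.c + y₁.a * y₁.b * T n₁ = x.c := congrArg Heisenberg.c h₁
  have ha₂ : n₂ * y₂.a = x.a := congrArg Heisenberg.a h₂
  have hb₂ : n₂ * y₂.b = x.b := congrArg Heisenberg.b h₂
  have hc₂ : n₂ * y₂.c + y₂.a * y₂.b * T n₂ = x.c := congrArg Heisenberg.c h₂
  by_cases hab : x.a = 0 ∧ x.b = 0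
  · -- central case
    have ea₁ : y₁.a = 0 := by
      have h := ha₁; rw [hab.1] at h; exact (mul_eq_zero.mp h).resolve_left hn₁
    have eb₁ : y₁.b = 0 := by
      have h := hb₁; rw [hab.2] at h; exact (mul_eq_zero.mp h).resolve_left hn₁
    have ea₂ : y₂.a = 0 := by
      have h := ha₂; rw [hab.1] at h; exact (mul_eq_zero.mp h).resolve_left hn₂
    have eb₂ : y₂.b = 0 := by
      have h := hb₂; rw [hab.2] at h; exact (mul_eq_zero.mp h).resolve_left hn₂
    obtain ⟨m₁, hm₁⟩ : ((Int.gcd y₁.c y₂.c : ℤ)) ∣ y₁.c := Int.gcd_dvd_left _ _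
    obtain ⟨m₂, hm₂⟩ : ((Int.gcd y₁.c y₂.c : ℤ)) ∣ y₂.c := Int.gcd_dvd_right _ _
    refine ⟨⟨0, 0, (Int.gcd y₁.c y₂.c : ℤ)⟩, ?_, ?_⟩
    · refine Subgroup.mem_zpowers_iff.mpr ⟨m₁, ?_⟩
      rw [zpow_def]
      ext <;> simp [ea₁, eb₁]
      linear_combination -hm₁
    · refine Subgroup.mem_zpowers_iff.mpr ⟨m₂, ?_⟩
      rw [zpow_def]
      ext <;> simp [ea₂, eb₂]
      linear_combination -hm₂
  · -- non-central case
    have hd0 : (Int.gcd x.a x.b : ℤ) ≠ 0 := by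
      simp only [ne_eq, Int.natCast_eq_zero, Int.gcd_eq_zero_iff]
      exact hab
    set d : ℤ := (Int.gcd x.a x.b : ℤ) with hdDef
    obtain ⟨a₀, ha₀⟩ : d ∣ x.a := Int.gcd_dvd_left _ _
    obtain ⟨b₀, hb₀⟩ : d ∣ x.b := Int.gcd_dvd_right _ _
    have hnd₁ : n₁ ∣ d := Int.dvd_coe_gcd ⟨y₁.a, ha₁.symm⟩ ⟨y₁.b, hb₁.symm⟩
    have hnd₂ : n₂ ∣ d := Int.dvd_coe_gcd ⟨y₂.a, ha₂.symm⟩ ⟨y₂.b, hb₂.symm⟩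
    obtain ⟨e₁, he₁⟩ := hnd₁
    obtain ⟨e₂, he₂⟩ := hnd₂
    have hya₁ : y₁.a = e₁ * a₀ := mul_left_cancel₀ hn₁ (by rw [ha₁, ha₀, he₁]; ring)
    have hyb₁ : y₁.b = e₁ * b₀ := mul_left_cancel₀ hn₁ (by rw [hb₁, hb₀, he₁]; ring)
    have hya₂ : y₂.a = e₂ * a₀ := mul_left_cancel₀ hn₂ (by rw [ha₂, ha₀, he₂]; ring)
    have hyb₂ : y₂.b = e₂ * b₀ := mul_left_cancel₀ hn₂ (by rw [hb₂, hb₀, he₂]; ring)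
    set w : ℤ := x.c - a₀ * b₀ * T d with hwDef
    have hTd₁ : T d = e₁ ^ 2 * T n₁ + n₁ * T e₁ := by rw [he₁]; exact T_mul n₁ e₁
    have hTd₂ : T d = e₂ ^ 2 * T n₂ + n₂ * T e₂ := by rw [he₂]; exact T_mul n₂ e₂
    have hu₁ : n₁ * (y₁.c - a₀ * b₀ * T e₁) = w := by
      rw [hya₁, hyb₁] at hc₁
      rw [hwDef]
      linear_combination hc₁ + a₀ * b₀ * hTd₁
    have hu₂ : n₂ * (y₂.c - a₀ * b₀ * T e₂) = w := by
      rw [hya₂, hyb₂] at hc₂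
      rw [hwDef]
      linear_combination hc₂ + a₀ * b₀ * hTd₂
    set N : ℤ := (Int.lcm n₁ n₂ : ℤ) with hNDef
    have hdN : N ∣ d := Int.coe_lcm_dvd ⟨e₁, he₁⟩ ⟨e₂, he₂⟩
    have hwN : N ∣ w := Int.coe_lcm_dvd ⟨_, hu₁.symm⟩ ⟨_, hu₂.symm⟩
    have hN0 : N ≠ 0 := fun h => hd0 (zero_dvd_iff.mp (h ▸ hdN))
    obtain ⟨ζ₁, hζ₁⟩ := hdN
    obtain ⟨ζ₂, hζ₂⟩ := hwN
    obtain ⟨m₁, hm₁⟩ : n₁ ∣ N := Int.dvd_lcm_left _ _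
    obtain ⟨m₂, hm₂⟩ : n₂ ∣ N := Int.dvd_lcm_right _ _
    have hmζ₁ : m₁ * ζ₁ = e₁ :=
      mul_left_cancel₀ hn₁ (by rw [← mul_assoc, ← hm₁, ← hζ₁, he₁])
    have hmζ₁' : m₂ * ζ₁ = e₂ :=
      mul_left_cancel₀ hn₂ (by rw [← mul_assoc, ← hm₂, ← hζ₁, he₂])
    have hmζ₂ : m₁ * ζ₂ = y₁.c - a₀ * b₀ * T e₁ :=
      mul_left_cancel₀ hn₁ (by rw [← mul_assoc, ← hm₁, ← hζ₂, ← hu₁])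
    have hmζ₂' : m₂ * ζ₂ = y₂.c - a₀ * b₀ * T e₂ :=
      mul_left_cancel₀ hn₂ (by rw [← mul_assoc, ← hm₂, ← hζ₂, ← hu₂])
    have hTe₁ : T e₁ = ζ₁ ^ 2 * T m₁ + m₁ * T ζ₁ := by rw [← hmζ₁]; exact T_mul m₁ ζ₁
    have hTe₂ : T e₂ = ζ₁ ^ 2 * T m₂ + m₂ * T ζ₁ := by rw [← hmζ₁']; exact T_mul m₂ ζ₁
    refine ⟨⟨ζ₁ * a₀, ζ₁ * b₀, ζ₂ + a₀ * b₀ * T ζ₁⟩, ?_, ?_⟩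
    · refine Subgroup.mem_zpowers_iff.mpr ⟨m₁, ?_⟩
      rw [zpow_def]
      ext
      · show m₁ * (ζ₁ * a₀) = y₁.a
        rw [hya₁]; linear_combination a₀ * hmζ₁
      · show m₁ * (ζ₁ * b₀) = y₁.b
        rw [hyb₁]; linear_combination b₀ * hmζ₁
      · show m₁ * (ζ₂ + a₀ * b₀ * T ζ₁) + (ζ₁ * a₀) * (ζ₁ * b₀) * T m₁ = y₁.c
        linear_combination hmζ₂ - a₀ * b₀ * hTe₁
    · refine Subgroup.mem_zpowers_iff.mpr ⟨m₂, ?_⟩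
      rw [zpow_def]
      ext
      · show m₂ * (ζ₁ * a₀) = y₂.a
        rw [hya₂]; linear_combination a₀ * hmζ₁'
      · show m₂ * (ζ₁ * b₀) = y₂.b
        rw [hyb₂]; linear_combination b₀ * hmζ₁'
      · show m₂ * (ζ₂ + a₀ * b₀ * T ζ₁) + (ζ₁ * a₀) * (ζ₁ * b₀) * T m₂ = y₂.c
        linear_combination hmζ₂' - a₀ * b₀ * hTe₂

/-- There is a root of `x` with `|exponent|` maximal. -/
theorem exists_max_root {x : Heisenberg} (hx : x ≠ 1) :
    ∃ (y : Heisenberg) (n : ℤ), y ^ n = x ∧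
      ∀ (z : Heisenberg) (m : ℤ), z ^ m = x → m.natAbs ≤ n.natAbs := by
  classical
  set D : ℤ := if x.a ≠ 0 then x.a else if x.b ≠ 0 then x.b else x.c with hDDef
  have hD0 : D ≠ 0 := by
    rw [hDDef]
    split_ifs with h1 h2
    · exact h1
    · exact h2
    · intro hc
      apply hx
      have : x = ⟨x.a, x.b, x.c⟩ := rfl
      rw [one_def, this]
      simp only [not_not] at h1 h2
      rw [h1, h2, hc]
  have hdvd : ∀ (m : ℤ) (z : Heisenberg), z ^ m = x → m ∣ D := by
    intro m z h
    have hm0 : m ≠ 0 := by rintro rfl; rw [zpow_zero] at h; exact hx h.symm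
    rw [zpow_def] at h
    have hma : m ∣ x.a := ⟨z.a, (congrArg Heisenberg.a h).symm⟩
    have hmb : m ∣ x.b := ⟨z.b, (congrArg Heisenberg.b h).symm⟩
    have hmc : x.a = 0 → x.b = 0 → m ∣ x.c := by
      intro hxa hxb
      have ea : z.a = 0 := by
        have h' : m * z.a = x.a := congrArg Heisenberg.a h
        rw [hxa] at h'; exact (mul_eq_zero.mp h').resolve_left hm0
      have hc : m * z.c + z.a * z.b * T m = x.c := congrArg Heisenberg.c h
      rw [ea] at hc
      exact ⟨z.c, by linarith⟩
    rw [hDDef]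
    split_ifs with h1 h2
    · exact hma
    · exact hmb
    · simp only [not_not] at h1 h2
      exact hmc h1 h2
  have hbound : ∀ (m : ℤ) (z : Heisenberg), z ^ m = x → m.natAbs ≤ D.natAbs := by
    intro m z h
    exact Nat.le_of_dvd (Int.natAbs_pos.mpr hD0) (Int.natAbs_dvd_natAbs.mpr (hdvd m z h))
  set P : ℕ → Prop := fun k => ∃ (n : ℤ) (y : Heisenberg), n.natAbs = k ∧ y ^ n = x with hP
  have hP1 : P 1 := ⟨1, x, rfl, zpow_one x⟩
  have h1D : 1 ≤ D.natAbs := Int.natAbs_pos.mpr hD0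
  have hspec : P (Nat.findGreatest P D.natAbs) := Nat.findGreatest_spec h1D hP1
  obtain ⟨n₀, y₀, hn₀k, hy₀⟩ := hspec
  refine ⟨y₀, n₀, hy₀, ?_⟩
  intro z m h
  have : m.natAbs ≤ Nat.findGreatest P D.natAbs :=
    Nat.le_findGreatest (hbound m z h) ⟨m, z, rfl, h⟩
  omega

theorem zpowers_max {x y₀ : Heisenberg} {n₀ : ℤ} (hx : x ≠ 1) (h : y₀ ^ n₀ = x)
    (hmax : ∀ (z : Heisenberg) (m : ℤ), z ^ m = x → m.natAbs ≤ n₀.natAbs) :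
    IsMaximalCyclic (Subgroup.zpowers y₀) := by
  refine ⟨zpowers_isCyclic y₀, ?_⟩
  intro L hL hle
  obtain ⟨z, rfl⟩ := exists_zpowers L hL
  obtain ⟨m, hm⟩ := Subgroup.mem_zpowers_iff.mp (hle (Subgroup.mem_zpowers y₀))
  have hzx : z ^ (m * n₀) = x := by rw [zpow_mul, hm, h]
  have hb := hmax z (m * n₀) hzx
  have hn0 : n₀ ≠ 0 := by rintro rfl; rw [zpow_zero] at h; exact hx h.symm
  have hm0 : m ≠ 0 := by
    rintro rfl; rw [zpow_zero] at hm; rw [← hm, one_zpow] at h; exact hx h.symm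
  have hm1 : m.natAbs = 1 := by
    rw [Int.natAbs_mul] at hb
    have h1 : 0 < m.natAbs := Int.natAbs_pos.mpr hm0
    have h2 : 0 < n₀.natAbs := Int.natAbs_pos.mpr hn0
    nlinarith
  have hz : z ∈ Subgroup.zpowers y₀ := by
    have hm' : m = 1 ∨ m = -1 := by omega
    rcases hm' with h' | h'
    · subst h'; rw [zpow_one] at hm; rw [hm]; exact Subgroup.mem_zpowers y₀
    · subst h'
      have hzy : z = y₀⁻¹ := by rw [← hm]; simp
      rw [hzy]
      exact inv_mem (Subgroup.mem_zpowers y₀)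
  exact le_antisymm (Subgroup.zpowers_le.mpr hz) hle

end Heisenberg

/-- Every nontrivial cyclic subgroup `K` of the discrete Heisenberg group `Γ₃` is
contained in exactly one maximal cyclic subgroup of `Γ₃`. -/
theorem heisenberg_unique_maximalCyclic (K : Subgroup Heisenberg)
    (hK : K ≠ ⊥) (hcyc : IsCyclic K) :
    ∃! H : Subgroup Heisenberg, IsMaximalCyclic H ∧ K ≤ H := by
  obtain ⟨x, rfl⟩ := Heisenberg.exists_zpowers K hcyc
  have hx : x ≠ 1 := by
    rintro rfl
    exact hK Subgroup.zpowers_one_eq_bot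
  obtain ⟨y₀, n₀, hy₀, hmax⟩ := Heisenberg.exists_max_root hx
  have hmc := Heisenberg.zpowers_max hx hy₀ hmax
  refine ⟨Subgroup.zpowers y₀, ⟨hmc, ?_⟩, ?_⟩
  · exact Subgroup.zpowers_le.mpr (Subgroup.mem_zpowers_iff.mpr ⟨n₀, hy₀⟩)
  · rintro H' ⟨hH'max, hH'le⟩
    obtain ⟨y', rfl⟩ := Heisenberg.exists_zpowers H' hH'max.1
    obtain ⟨n', hn'⟩ := Subgroup.mem_zpowers_iff.mp (hH'le (Subgroup.mem_zpowers x))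
    obtain ⟨z, hz₁, hz₂⟩ := Heisenberg.common_root hx hn' hy₀
    have e1 : Subgroup.zpowers z = Subgroup.zpowers y' :=
      hH'max.2 _ (Heisenberg.zpowers_isCyclic z) (Subgroup.zpowers_le.mpr hz₁)
    have e2 : Subgroup.zpowers z = Subgroup.zpowers y₀ :=
      hmc.2 _ (Heisenberg.zpowers_isCyclic z) (Subgroup.zpowers_le.mpr hz₂)
    rw [← e1, e2]
end

section
/- Any two distinct maximal cyclic subgroups of the discrete Heisenberg group Γ₃ intersect trivially: if H and H' are maximal cyclic subgroups of Γ₃ and H ∩ H' is nontrivial, then H = H'. -/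
namespace Heisenberg

theorem zpow_spec (x : Heisenberg) (k : ℤ) :
    (x ^ k).a = k * x.a ∧ (x ^ k).b = k * x.b ∧
      2 * (x ^ k).c = 2 * k * x.c + x.a * x.b * (k * (k - 1)) := by
  induction k using Int.induction_on with
  | zero => simp [one_def]
  | succ k ih =>
    obtain ⟨h1, h2, h3⟩ := ih
    rw [zpow_add_one, mul_def]
    refine ⟨by push_cast; linarith, by push_cast; linarith, ?_⟩
    push_cast at h1 h2 h3 ⊢
    linear_combination h3 + 2 * x.b * h1
  | pred k ih =>
    obtain ⟨h1, h2, h3⟩ := ih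
    rw [zpow_sub_one, mul_def, inv_def]
    refine ⟨by push_cast; linarith, by push_cast; linarith, ?_⟩
    push_cast at h1 h2 h3 ⊢
    linear_combination h3 - 2 * x.b * h1

theorem torsion_free (x : Heisenberg) (k : ℤ) (hk : k ≠ 0) (h : x ^ k = 1) : x = 1 := by
  obtain ⟨h1, h2, h3⟩ := zpow_spec x k
  rw [h, one_def] at h1 h2 h3
  simp at h1 h2 h3
  have ha : x.a = 0 := h1.resolve_left hk
  have hb : x.b = 0 := h2.resolve_left hk
  have hc : x.c = 0 := by
    rw [ha] at h3; simp at h3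
    exact h3.resolve_left hk
  exact Heisenberg.ext ha hb hc

theorem commute_of_eq (g g' : Heisenberg) (hab : g.a * g'.b = g'.a * g.b) :
    Commute g g' := by
  show g * g' = g' * g
  ext <;> simp [mul_def] <;> linarith

end Heisenberg

theorem zpowers_isCyclic {G : Type*} [Group G] (g : G) :
    IsCyclic (Subgroup.zpowers g) := by
  refine ⟨⟨⟨g, Subgroup.mem_zpowers g⟩, fun x => ?_⟩⟩
  obtain ⟨k, hk⟩ := x.2
  exact ⟨k, Subtype.ext (by simpa using hk)⟩

theorem exists_zpowers_eq {G : Type*} [Group G] (H : Subgroup G) (h : IsCyclic H) :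
    ∃ g : G, H = Subgroup.zpowers g := by
  obtain ⟨⟨g, hgH⟩, hg⟩ := h.exists_generator
  refine ⟨g, le_antisymm ?_ ((Subgroup.zpowers_le).2 hgH)⟩
  intro x hx
  obtain ⟨k, hk⟩ := hg ⟨x, hx⟩
  exact ⟨k, congrArg Subtype.val hk⟩

/-- Any two distinct maximal cyclic subgroups of the discrete Heisenberg group `Γ₃`
intersect trivially: if their intersection is nontrivial, they are equal. -/
theorem heisenberg_maximalCyclic_inter (H H' : Subgroup Heisenberg)
    (hH : IsMaximalCyclic H) (hH' : IsMaximalCyclic H') (hne : H ⊓ H' ≠ ⊥) :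
    H = H' := by
  obtain ⟨g, rfl⟩ := exists_zpowers_eq H hH.1
  obtain ⟨g', rfl⟩ := exists_zpowers_eq H' hH'.1
  obtain ⟨⟨x, hx⟩, hx1⟩ := Subgroup.ne_bot_iff_exists_ne_one.1 hne
  have hx1' : x ≠ 1 := fun h => hx1 (Subtype.ext h)
  obtain ⟨m, hm⟩ := hx.1
  obtain ⟨n, hn⟩ := hx.2
  have hm0 : m ≠ 0 := by rintro rfl; exact hx1' (by simpa using hm.symm)
  have hn0 : n ≠ 0 := by rintro rfl; exact hx1' (by simpa using hn.symm)
  have key : g ^ m = g' ^ n := hm.trans hn.symm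
  -- derive commutation
  obtain ⟨ha, hb, -⟩ := Heisenberg.zpow_spec g m
  obtain ⟨ha', hb', -⟩ := Heisenberg.zpow_spec g' n
  rw [key] at ha hb
  have hcomm : Commute g g' := by
    apply Heisenberg.commute_of_eq
    have h1 : m * n * (g.a * g'.b) = m * n * (g'.a * g.b) := by
      have e1 : m * g.a = n * g'.a := by rw [← ha, ← ha']
      have e2 : m * g.b = n * g'.b := by rw [← hb, ← hb']
      linear_combination (n * g'.b) * e1 - (n * g'.a) * e2
    have := mul_ne_zero hm0 hn0
    exact mul_left_cancel₀ this h1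
  -- reduce to coprime exponents
  set d : ℤ := (Int.gcd m n : ℤ) with hd
  have hdnat : Int.gcd m n ≠ 0 := fun hz => hm0 (Int.gcd_eq_zero_iff.1 hz).1
  have hd0 : d ≠ 0 := Int.natCast_ne_zero.2 hdnat
  set m₁ : ℤ := m / d with hm₁
  set n₁ : ℤ := n / d with hn₁
  have hdm : d * m₁ = m := Int.mul_ediv_cancel' (Int.gcd_dvd_left m n)
  have hdn : d * n₁ = n := Int.mul_ediv_cancel' (Int.gcd_dvd_right m n)
  have hcop : Int.gcd m₁ n₁ = 1 :=
    Int.gcd_div_gcd_div_gcd (Nat.pos_of_ne_zero hdnat)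
  have key1 : g ^ m₁ = g' ^ n₁ := by
    have hpow : (g ^ m₁ * g' ^ (-n₁)) ^ d = 1 := by
      rw [(hcomm.zpow_zpow m₁ (-n₁)).mul_zpow, ← zpow_mul, ← zpow_mul,
        show m₁ * d = m by rw [mul_comm]; exact hdm,
        show -n₁ * d = -n by rw [neg_mul, mul_comm, hdn],
        key, zpow_neg, mul_inv_cancel]
    have := Heisenberg.torsion_free _ d hd0 hpow
    rwa [zpow_neg, mul_inv_eq_one] at this
  -- Bezout
  obtain ⟨u, v, huv⟩ : ∃ u v : ℤ, m₁ * u + n₁ * v = 1 := by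
    refine ⟨Int.gcdA m₁ n₁, Int.gcdB m₁ n₁, ?_⟩
    have := Int.gcd_eq_gcd_ab m₁ n₁
    rw [hcop] at this
    push_cast at this
    linarith
  set h : Heisenberg := g ^ v * g' ^ u with hh
  have hgh : g ∈ Subgroup.zpowers h := by
    refine ⟨n₁, ?_⟩
    show h ^ n₁ = g
    rw [hh, (hcomm.zpow_zpow v u).mul_zpow, ← zpow_mul, ← zpow_mul,
      mul_comm u n₁, zpow_mul g' n₁ u, ← key1, ← zpow_mul, ← zpow_add,
      show v * n₁ + m₁ * u = 1 by linarith, zpow_one]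
  have hg'h : g' ∈ Subgroup.zpowers h := by
    refine ⟨m₁, ?_⟩
    show h ^ m₁ = g'
    rw [hh, (hcomm.zpow_zpow v u).mul_zpow, ← zpow_mul, ← zpow_mul,
      mul_comm v m₁, zpow_mul g m₁ v, key1, ← zpow_mul, ← zpow_add,
      show n₁ * v + u * m₁ = 1 by linarith, zpow_one]
  have e1 : Subgroup.zpowers h = Subgroup.zpowers g :=
    hH.2 _ (zpowers_isCyclic h) (Subgroup.zpowers_le.2 hgh)
  have e2 : Subgroup.zpowers h = Subgroup.zpowers g' :=
    hH'.2 _ (zpowers_isCyclic h) (Subgroup.zpowers_le.2 hg'h)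
  rw [← e1, ← e2]
end

section
/- Let H be a maximal cyclic subgroup of the discrete Heisenberg group Γ₃, and let γ, γ' ∈ Γ₃. Then the following are equivalent: (i) γHγ⁻¹ ⊆ γ'Hγ'⁻¹; (ii) γHγ⁻¹ = γ'Hγ'⁻¹; (iii) γ'⁻¹γ belongs to the normalizer N(H) of H in Γ₃ (equivalently, γ ∈ γ'·N(H)). -/
namespace Heisenberg

/-- The abelianization projection onto the `(a,b)` coordinates. -/
def projAB : Heisenberg →* Multiplicative (ℤ × ℤ) where
  toFun x := Multiplicative.ofAdd (x.a, x.b)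
  map_one' := rfl
  map_mul' _ _ := rfl

theorem zpow_ab (x : Heisenberg) (k : ℤ) :
    (x ^ k).a = k * x.a ∧ (x ^ k).b = k * x.b := by
  have h := map_zpow projAB x k
  have h2 : ((x ^ k).a, (x ^ k).b) = k • (x.a, x.b) := by
    have := congrArg Multiplicative.toAdd h
    rwa [toAdd_zpow] at this
  constructor
  · have := congrArg Prod.fst h2
    simpa [smul_eq_mul] using this
  · have := congrArg Prod.snd h2
    simpa [smul_eq_mul] using this

theorem conj_a (g x : Heisenberg) : (g * x * g⁻¹).a = x.a := by
  simp [mul_def, inv_def]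

theorem conj_b (g x : Heisenberg) : (g * x * g⁻¹).b = x.b := by
  simp [mul_def, inv_def]

theorem conj_c (g x : Heisenberg) : (g * x * g⁻¹).c = x.c + g.a * x.b - x.a * g.b := by
  simp [mul_def, inv_def]; ring

/-- Key fact: if a conjugate of `x` lies in `zpowers x`, it equals `x`. -/
theorem conj_self_of_mem_zpowers (g x : Heisenberg)
    (h : g * x * g⁻¹ ∈ Subgroup.zpowers x) : g * x * g⁻¹ = x := by
  obtain ⟨k, hk⟩ := h
  have hk' : x ^ k = g * x * g⁻¹ := hk
  by_cases hab : x.a = 0 ∧ x.b = 0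
  · ext
    · exact conj_a g x
    · exact conj_b g x
    · rw [conj_c, hab.1, hab.2]; ring
  · have ha : (g * x * g⁻¹).a = x.a := conj_a g x
    have hb : (g * x * g⁻¹).b = x.b := conj_b g x
    rw [← hk', (zpow_ab x k).1] at ha
    rw [← hk', (zpow_ab x k).2] at hb
    have hk1 : k = 1 := by
      rcases not_and_or.mp hab with h0 | h0
      · exact mul_right_cancel₀ h0 (by linarith : k * x.a = 1 * x.a)
      · exact mul_right_cancel₀ h0 (by linarith : k * x.b = 1 * x.b)
    rw [hk1] at hk'
    simpa using hk'.symm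

end Heisenberg

theorem conj_map_eq_iff_mem_normalizer {G : Type*} [Group G] (H : Subgroup G) (g : G) :
    H.map (MulAut.conj g).toMonoidHom = H ↔ g ∈ Subgroup.normalizer (H : Set G) := by
  rw [Subgroup.mem_normalizer_iff]
  constructor
  · intro h n
    constructor
    · intro hn
      have : g * n * g⁻¹ ∈ H.map (MulAut.conj g).toMonoidHom := ⟨n, hn, rfl⟩
      rwa [h] at this
    · intro hn
      have : g * n * g⁻¹ ∈ H.map (MulAut.conj g).toMonoidHom := by rw [h]; exact hn
      obtain ⟨m, hm, hme⟩ := this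
      have hme' : g * m * g⁻¹ = g * n * g⁻¹ := hme
      have : m = n := mul_left_cancel (mul_right_cancel hme')
      rwa [← this]
  · intro h
    ext n
    constructor
    · rintro ⟨m, hm, rfl⟩
      exact (h m).mp hm
    · intro hn
      refine ⟨g⁻¹ * n * g, (h (g⁻¹ * n * g)).mpr ?_, ?_⟩
      · have he : g * (g⁻¹ * n * g) * g⁻¹ = n := by group
        rwa [he]
      · show g * (g⁻¹ * n * g) * g⁻¹ = n
        group

theorem map_conj_comp {G : Type*} [Group G] (H : Subgroup G) (a b : G) :
    (H.map (MulAut.conj b).toMonoidHom).map (MulAut.conj a).toMonoidHom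
      = H.map (MulAut.conj (a * b)).toMonoidHom := by
  rw [Subgroup.map_map]
  congr 1
  ext y
  show a * (b * y * b⁻¹) * a⁻¹ = (a * b) * y * (a * b)⁻¹
  group


/-- For a maximal cyclic subgroup `H` of the discrete Heisenberg group `Γ₃` and
`γ, γ' ∈ Γ₃`, the following are equivalent: (i) `γHγ⁻¹ ⊆ γ'Hγ'⁻¹`;
(ii) `γHγ⁻¹ = γ'Hγ'⁻¹`; (iii) `γ'⁻¹γ ∈ N(H)`, i.e. `γ ∈ γ'·N(H)`. -/
theorem heisenberg_conj_maximalCyclic (H : Subgroup Heisenberg)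
    (hmax : IsMaximalCyclic H) (γ γ' : Heisenberg) :
    (H.map (MulAut.conj γ).toMonoidHom ≤ H.map (MulAut.conj γ').toMonoidHom ↔
        H.map (MulAut.conj γ).toMonoidHom = H.map (MulAut.conj γ').toMonoidHom) ∧
    (H.map (MulAut.conj γ).toMonoidHom = H.map (MulAut.conj γ').toMonoidHom ↔
        γ'⁻¹ * γ ∈ Subgroup.normalizer (H : Set Heisenberg)) ∧
    (γ'⁻¹ * γ ∈ Subgroup.normalizer (H : Set Heisenberg) ↔ ∃ n ∈ Subgroup.normalizer (H : Set Heisenberg), γ = γ' * n) := by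
  have key : ∀ g : Heisenberg, H.map (MulAut.conj g).toMonoidHom ≤ H → g ∈ Subgroup.normalizer (H : Set Heisenberg) := by
    intro g hle
    obtain ⟨hcyc, -⟩ := hmax
    obtain ⟨⟨x, hxH⟩, hx⟩ := hcyc
    have hgen : H = Subgroup.zpowers x := by
      apply le_antisymm
      · intro y hy
        obtain ⟨k, hk⟩ := hx ⟨y, hy⟩
        exact ⟨k, congrArg Subtype.val hk⟩
      · rw [Subgroup.zpowers_le]; exact hxH
    have hgx : g * x * g⁻¹ ∈ H := hle ⟨x, hxH, rfl⟩
    rw [hgen] at hgx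
    have hfix : g * x * g⁻¹ = x := Heisenberg.conj_self_of_mem_zpowers g x hgx
    rw [Subgroup.mem_normalizer_iff]
    intro h
    rw [hgen]
    constructor
    · rintro ⟨k, rfl⟩
      exact ⟨k, by rw [← conj_zpow, hfix]⟩
    · rintro ⟨k, hk⟩
      have hk' : x ^ k = g * h * g⁻¹ := hk
      have hxk : g * x ^ k * g⁻¹ = x ^ k := by rw [← conj_zpow, hfix]
      refine ⟨k, ?_⟩
      have h2 : g * x ^ k * g⁻¹ = g * h * g⁻¹ := by rw [hxk, hk']
      exact mul_left_cancel (mul_right_cancel h2)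
  have hcomp : (H.map (MulAut.conj (γ'⁻¹ * γ)).toMonoidHom).map (MulAut.conj γ').toMonoidHom
      = H.map (MulAut.conj γ).toMonoidHom := by
    rw [map_conj_comp]
    congr 2
    group
  have h23 : H.map (MulAut.conj γ).toMonoidHom = H.map (MulAut.conj γ').toMonoidHom ↔
      γ'⁻¹ * γ ∈ Subgroup.normalizer (H : Set Heisenberg) := by
    constructor
    · intro heq
      rw [← hcomp] at heq
      have hinj : Function.Injective (MulAut.conj γ').toMonoidHom :=
        (MulAut.conj γ').injective
      have := Subgroup.map_injective hinj heq
      exact (conj_map_eq_iff_mem_normalizer H _).mp this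
    · intro hn
      rw [← hcomp, (conj_map_eq_iff_mem_normalizer H _).mpr hn]
  refine ⟨⟨?_, le_of_eq⟩, h23, ?_⟩
  · intro hle
    rw [h23]
    apply key
    intro y hy
    rw [← hcomp] at hle
    have : (MulAut.conj γ').toMonoidHom y ∈
        (H.map (MulAut.conj (γ'⁻¹ * γ)).toMonoidHom).map (MulAut.conj γ').toMonoidHom :=
      ⟨y, hy, rfl⟩
    obtain ⟨m, hm, hme⟩ := hle this
    have hme' : γ' * m * γ'⁻¹ = γ' * y * γ'⁻¹ := hme
    have : m = y := mul_left_cancel (mul_right_cancel hme')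
    rwa [← this]
  · constructor
    · intro h
      exact ⟨γ'⁻¹ * γ, h, by group⟩
    · rintro ⟨n, hn, rfl⟩
      simpa using hn
end
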